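/- Let q be a prime power, ℓ, m ≥ 1, let A and B be ℓm×ℓm matrices over F_q that are F_q-linear combinations of the monomials x^a y^b (x = S_ℓ ⊗ I_m, y = I_ℓ ⊗ S_m), and let γ₁, γ₂, δ₁, δ₂ ∈ F_q be nonzero. Set H_X = [γ₁A | γ₂B] and H_Z = [δ₁Bᵀ | δ₂Aᵀ]. Then rank_{F_q}(H_X) = rank_{F_q}(H_Z). -/

import Mathlib

open Matrix Kronecker

/-- The ℓ×ℓ cyclic shift matrix over `F`: entry `(i,j)` is 1 iff `j ≡ i+1 (mod ℓ)`. -/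
def cyclicShift (ℓ : ℕ) [NeZero ℓ] (F : Type*) [Zero F] [One F] :
    Matrix (ZMod ℓ) (ZMod ℓ) F :=
  fun i j => if j = i + 1 then 1 else 0

/-- Rank is invariant under reindexing rows and columns by equivalences. -/
lemma rank_submatrix_equiv {F : Type*} [Field F] {k l m n : Type*}
    [Fintype k] [Fintype l] [Fintype m] [Fintype n]
    (M : Matrix k l F) (e₁ : m ≃ k) (e₂ : n ≃ l) :
    (M.submatrix e₁ e₂).rank = M.rank := by
  have : M.submatrix ⇑e₁ ⇑e₂ = reindex e₁.symm e₂.symm M := by simp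
  rw [this, Matrix.rank, Matrix.rank, mulVecLin_reindex, LinearMap.range_comp,
    LinearMap.range_comp, LinearEquiv.range, Submodule.map_top, LinearEquiv.finrank_map_eq]

/-- for bivariate-bicycle matrices `A`, `B` over `F_q` and nonzero scalars
`γ₁, γ₂, δ₁, δ₂`, the parity-check matrices `H_X = [γ₁A | γ₂B]` and `H_Z = [δ₁Bᵀ | δ₂Aᵀ]`
have equal rank over `F_q`. -/
theorem bb_rank_HX_eq_rank_HZ
    {F : Type*} [Field F] [Fintype F] (ℓ m : ℕ) [NeZero ℓ] [NeZero m]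
    (x y A B : Matrix (ZMod ℓ × ZMod m) (ZMod ℓ × ZMod m) F)
    (hx : x = cyclicShift ℓ F ⊗ₖ (1 : Matrix (ZMod m) (ZMod m) F))
    (hy : y = (1 : Matrix (ZMod ℓ) (ZMod ℓ) F) ⊗ₖ cyclicShift m F)
    (hA : A ∈ Submodule.span F {M : Matrix (ZMod ℓ × ZMod m) (ZMod ℓ × ZMod m) F |
        ∃ a b : ℕ, M = x ^ a * y ^ b})
    (hB : B ∈ Submodule.span F {M : Matrix (ZMod ℓ × ZMod m) (ZMod ℓ × ZMod m) F |
        ∃ a b : ℕ, M = x ^ a * y ^ b})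
    (γ₁ γ₂ δ₁ δ₂ : F) (hγ₁ : γ₁ ≠ 0) (hγ₂ : γ₂ ≠ 0) (hδ₁ : δ₁ ≠ 0) (hδ₂ : δ₂ ≠ 0)
    (HX HZ : Matrix (ZMod ℓ × ZMod m) ((ZMod ℓ × ZMod m) ⊕ (ZMod ℓ × ZMod m)) F)
    (hHX : HX = fromCols (γ₁ • A) (γ₂ • B))
    (hHZ : HZ = fromCols (δ₁ • Bᵀ) (δ₂ • Aᵀ)) :
    HX.rank = HZ.rank := by
  classical
  -- the negation permutation
  let σ : (ZMod ℓ × ZMod m) ≃ (ZMod ℓ × ZMod m) :=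
    ⟨fun p => -p, fun p => -p, neg_neg, neg_neg⟩
  -- x and y transposed are given by reindexing along σ
  have hxt : xᵀ = x.submatrix σ σ := by
    subst hx
    ext ⟨i, j⟩ ⟨i', j'⟩
    simp only [transpose_apply, submatrix_apply, kroneckerMap_apply, Matrix.one_apply,
      cyclicShift, σ, Equiv.coe_fn_mk, Prod.fst_neg, Prod.snd_neg, Prod.mk.injEq]
    have h1 : (i = i' + 1) ↔ (-i' = -i + 1) :=
      ⟨fun h => by linear_combination h, fun h => by linear_combination h⟩
    have h2 : (j' = j) ↔ (-j = -j') := ⟨fun h => by rw [h], fun h => by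
      have := neg_injective h; exact this.symm⟩
    rw [if_congr h1 rfl rfl, if_congr h2 rfl rfl]
  have hyt : yᵀ = y.submatrix σ σ := by
    subst hy
    ext ⟨i, j⟩ ⟨i', j'⟩
    simp only [transpose_apply, submatrix_apply, kroneckerMap_apply, Matrix.one_apply,
      cyclicShift, σ, Equiv.coe_fn_mk, Prod.fst_neg, Prod.snd_neg, Prod.mk.injEq]
    have h1 : (j = j' + 1) ↔ (-j' = -j + 1) :=
      ⟨fun h => by linear_combination h, fun h => by linear_combination h⟩
    have h2 : (i' = i) ↔ (-i = -i') := ⟨fun h => by rw [h], fun h => by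
      have := neg_injective h; exact this.symm⟩
    rw [if_congr h2 rfl rfl, if_congr h1 rfl rfl]
  -- x and y commute
  have hcomm : x * y = y * x := by
    rw [hx, hy, ← Matrix.mul_kronecker_mul, ← Matrix.mul_kronecker_mul,
      Matrix.one_mul, Matrix.mul_one, Matrix.one_mul, Matrix.mul_one]
  have hcommT : xᵀ * yᵀ = yᵀ * xᵀ := by
    rw [← Matrix.transpose_mul, ← Matrix.transpose_mul, hcomm]
  -- the reindexing algebra equivalence
  let Φ : Matrix (ZMod ℓ × ZMod m) (ZMod ℓ × ZMod m) F ≃ₐ[F]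
      Matrix (ZMod ℓ × ZMod m) (ZMod ℓ × ZMod m) F := Matrix.reindexAlgEquiv F F σ.symm
  have hΦ : ∀ M : Matrix (ZMod ℓ × ZMod m) (ZMod ℓ × ZMod m) F,
      Φ M = M.submatrix σ σ := fun M => rfl
  -- transpose equals reindexing along σ for everything in the span
  have key : ∀ M ∈ Submodule.span F {M : Matrix (ZMod ℓ × ZMod m) (ZMod ℓ × ZMod m) F |
      ∃ a b : ℕ, M = x ^ a * y ^ b}, Mᵀ = M.submatrix σ σ := by
    intro M hM
    induction hM using Submodule.span_induction with
    | mem M hM =>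
        obtain ⟨a, b, rfl⟩ := hM
        calc (x ^ a * y ^ b)ᵀ = (y ^ b)ᵀ * (x ^ a)ᵀ := Matrix.transpose_mul _ _
          _ = (yᵀ) ^ b * (xᵀ) ^ a := by rw [Matrix.transpose_pow, Matrix.transpose_pow]
          _ = (xᵀ) ^ a * (yᵀ) ^ b := ((Commute.symm hcommT).pow_pow b a)
          _ = (x.submatrix σ σ) ^ a * (y.submatrix σ σ) ^ b := by rw [hxt, hyt]
          _ = Φ x ^ a * Φ y ^ b := by rw [hΦ, hΦ]
          _ = Φ (x ^ a * y ^ b) := by rw [_root_.map_mul, _root_.map_pow, _root_.map_pow]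
          _ = (x ^ a * y ^ b).submatrix σ σ := hΦ _
    | zero => simp
    | add M N _ _ ihM ihN => rw [Matrix.transpose_add, ihM, ihN]; ext i j; simp
    | smul a M _ ih => rw [Matrix.transpose_smul, ih]; ext i j; simp
  have hAt : Aᵀ = A.submatrix σ σ := key A hA
  have hBt : Bᵀ = B.submatrix σ σ := key B hB
  -- the common core matrix
  set C := fromCols A B with hC
  -- HX = C * D₁ with D₁ invertible
  have rX : HX.rank = C.rank := by
    set D₁ : Matrix ((ZMod ℓ × ZMod m) ⊕ (ZMod ℓ × ZMod m)) ((ZMod ℓ × ZMod m) ⊕ (ZMod ℓ × ZMod m)) F :=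
      fromBlocks (γ₁ • 1) 0 0 (γ₂ • 1) with hD₁
    have hD : C * D₁ = HX := by
      rw [hD₁]
      rw [hHX, hC, fromCols_mul_fromBlocks]
      simp [mul_smul_comm]
    have hunit : IsUnit D₁.det := by
      apply Matrix.isUnit_det_of_right_inverse
        (B := fromBlocks (γ₁⁻¹ • (1 : Matrix (ZMod ℓ × ZMod m) (ZMod ℓ × ZMod m) F)) 0 0
          (γ₂⁻¹ • 1))
      rw [hD₁, Matrix.fromBlocks_multiply]
      simp [smul_smul, mul_inv_cancel₀, inv_mul_cancel₀, hγ₁, hγ₂, Matrix.fromBlocks_one]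
    rw [← hD, Matrix.rank_mul_eq_left_of_isUnit_det _ _ hunit]
  -- HZ = (C * D₂).submatrix σ (σ ⊕ σ) with D₂ invertible
  have rZ : HZ.rank = C.rank := by
    set D₂ : Matrix ((ZMod ℓ × ZMod m) ⊕ (ZMod ℓ × ZMod m)) ((ZMod ℓ × ZMod m) ⊕ (ZMod ℓ × ZMod m)) F :=
      fromBlocks 0 (δ₂ • 1) (δ₁ • 1) 0 with hD₂
    have hD : C * D₂ = fromCols (δ₁ • B) (δ₂ • A) := by
      rw [hD₂]
      rw [hC, fromCols_mul_fromBlocks]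
      simp [mul_smul_comm]
    have hsub : HZ = (fromCols (δ₁ • B) (δ₂ • A)).submatrix σ (Equiv.sumCongr σ σ) := by
      rw [hHZ, hAt, hBt]
      ext i j
      cases j <;> simp [Matrix.fromCols, Matrix.submatrix_apply]
    have hunit : IsUnit D₂.det := by
      apply Matrix.isUnit_det_of_right_inverse
        (B := fromBlocks 0 (δ₁⁻¹ • (1 : Matrix (ZMod ℓ × ZMod m) (ZMod ℓ × ZMod m) F))
          (δ₂⁻¹ • 1) 0)
      rw [hD₂, Matrix.fromBlocks_multiply]
      simp [smul_smul, mul_inv_cancel₀, inv_mul_cancel₀, hδ₁, hδ₂, Matrix.fromBlocks_one]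
    rw [hsub, rank_submatrix_equiv, ← hD, Matrix.rank_mul_eq_left_of_isUnit_det _ _ hunit]
  rw [rX, rZ]
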